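/- For a Borel probability measure μ on [0,∞), the function t ↦ 1 + ψ_μ(-1/t), where ψ_μ(s) = ∫ su/(1-su) dμ(u), is a nondecreasing right-continuous function on (0,∞) with limit 1 as t → ∞ and limit μ({0}) as t → 0⁺; hence it is the distribution function of a probability measure Ξ(μ) on [0,∞) with Ξ(μ)({0}) = μ({0}). -/

import Mathlib

open MeasureTheory Set Filter Real

open Topology
section XiAux

variable {μ : Measure ℝ}

lemma xi_ae_nonneg (μ : Measure ℝ) (hμ : μ (Set.Iio 0) = 0) : ∀ᵐ u ∂μ, 0 ≤ u := by
  rw [ae_iff]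
  simp only [not_le]; exact hμ

lemma xi_meas (μ : Measure ℝ) (t : ℝ) :
    AEStronglyMeasurable (fun u : ℝ => t / (t + u)) μ :=
  (measurable_const.div (measurable_const.add measurable_id)).aestronglyMeasurable

lemma xi_int [IsFiniteMeasure μ] (hμ : μ (Set.Iio 0) = 0) {t : ℝ} (ht : 0 < t) :
    Integrable (fun u : ℝ => t / (t + u)) μ := by
  refine Integrable.mono' (integrable_const 1) (xi_meas μ t) ?_
  filter_upwards [xi_ae_nonneg μ hμ] with u hu
  have htu : 0 < t + u := by linarith
  rw [Real.norm_eq_abs, abs_div, abs_of_pos ht, abs_of_pos htu, div_le_one htu]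
  linarith

lemma xi_key [IsProbabilityMeasure μ] (hμ : μ (Set.Iio 0) = 0) {t : ℝ} (ht : 0 < t) :
    1 + ∫ u, (-1 / t) * u / (1 - (-1 / t) * u) ∂μ = ∫ u, t / (t + u) ∂μ := by
  have h1 : ∫ u, (-1 / t) * u / (1 - (-1 / t) * u) ∂μ
      = ∫ u, (t / (t + u) - 1) ∂μ := by
    refine integral_congr_ae ?_
    filter_upwards [xi_ae_nonneg μ hμ] with u hu
    have htu : t + u ≠ 0 := by positivity
    have ht' : t ≠ 0 := ne_of_gt ht
    have h2 : 1 - (-1 / t) * u = (t + u) / t := by field_simp; ring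
    rw [h2]
    field_simp
    ring
  rw [h1, integral_sub (xi_int hμ ht) (integrable_const 1), integral_const]
  simp

lemma xi_mono [IsFiniteMeasure μ] (hμ : μ (Set.Iio 0) = 0) :
    MonotoneOn (fun t : ℝ => ∫ u, t / (t + u) ∂μ) (Set.Ioi 0) := by
  intro s hs t ht hst
  simp only [Set.mem_Ioi] at hs ht
  refine integral_mono_ae (xi_int hμ hs) (xi_int hμ ht) ?_
  filter_upwards [xi_ae_nonneg μ hμ] with u hu
  rw [div_le_div_iff₀ (by linarith) (by linarith)]
  nlinarith

lemma xi_indicator_eq (μ : Measure ℝ) [IsFiniteMeasure μ] :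
    (μ {0}).toReal = ∫ u, Set.indicator {0} (fun _ => (1 : ℝ)) u ∂μ := by
  rw [integral_indicator_const (1 : ℝ) (measurableSet_singleton 0)]
  simp [measureReal_def]

lemma xi_ge [IsFiniteMeasure μ] (hμ : μ (Set.Iio 0) = 0) {t : ℝ} (ht : 0 < t) :
    (μ {0}).toReal ≤ ∫ u, t / (t + u) ∂μ := by
  rw [xi_indicator_eq μ]
  refine integral_mono_ae ((integrable_const (1 : ℝ)).indicator (measurableSet_singleton 0))
    (xi_int hμ ht) ?_
  filter_upwards [xi_ae_nonneg μ hμ] with u hu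
  rcases eq_or_lt_of_le hu with h0 | h0
  · simp [← h0, ne_of_gt ht]
  · have : Set.indicator ({0} : Set ℝ) (fun _ => (1 : ℝ)) u = 0 :=
      Set.indicator_of_notMem (by simpa using ne_of_gt h0) _
    rw [this]
    positivity

lemma xi_cont [IsFiniteMeasure μ] (hμ : μ (Set.Iio 0) = 0) {t : ℝ} (ht : 0 < t) :
    ContinuousAt (fun t : ℝ => ∫ u, t / (t + u) ∂μ) t := by
  refine continuousAt_of_dominated (bound := fun _ => 1)
    (Filter.Eventually.of_forall fun x => xi_meas μ x) ?_ (integrable_const 1) ?_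
  · filter_upwards [eventually_gt_nhds ht] with x hx
    filter_upwards [xi_ae_nonneg μ hμ] with u hu
    have hxu : 0 < x + u := by linarith
    rw [Real.norm_eq_abs, abs_div, abs_of_pos hx, abs_of_pos hxu, div_le_one hxu]
    linarith
  · filter_upwards [xi_ae_nonneg μ hμ] with u hu
    exact ContinuousAt.div continuousAt_id
      ((continuous_id.add continuous_const).continuousAt) (by positivity)

lemma xi_top [IsProbabilityMeasure μ] (hμ : μ (Set.Iio 0) = 0) :
    Tendsto (fun t : ℝ => ∫ u, t / (t + u) ∂μ) atTop (𝓝 1) := by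
  have h1 : (1 : ℝ) = ∫ _u, (1 : ℝ) ∂μ := by simp
  rw [h1]
  refine tendsto_integral_filter_of_dominated_convergence (fun _ => 1)
    (Filter.Eventually.of_forall fun x => xi_meas μ x) ?_ (integrable_const 1) ?_
  · filter_upwards [eventually_gt_atTop 0] with x hx
    filter_upwards [xi_ae_nonneg μ hμ] with u hu
    have hxu : 0 < x + u := by linarith
    rw [Real.norm_eq_abs, abs_div, abs_of_pos hx, abs_of_pos hxu, div_le_one hxu]
    linarith
  · filter_upwards [xi_ae_nonneg μ hμ] with u hu
    have h2 : Tendsto (fun x : ℝ => 1 - u / (x + u)) atTop (𝓝 1) := by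
      have : Tendsto (fun x : ℝ => u / (x + u)) atTop (𝓝 0) :=
        Tendsto.div_atTop tendsto_const_nhds (tendsto_atTop_add_const_right _ u tendsto_id)
      simpa using (tendsto_const_nhds (x := (1:ℝ))).sub this
    refine Tendsto.congr' ?_ h2
    filter_upwards [eventually_gt_atTop 0] with x hx
    have hxu : x + u ≠ 0 := by positivity
    field_simp
    ring

lemma xi_zero [IsProbabilityMeasure μ] (hμ : μ (Set.Iio 0) = 0) :
    Tendsto (fun t : ℝ => ∫ u, t / (t + u) ∂μ) (𝓝[>] 0) (𝓝 (μ {0}).toReal) := by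
  rw [xi_indicator_eq μ]
  refine tendsto_integral_filter_of_dominated_convergence (fun _ => 1)
    (Filter.Eventually.of_forall fun x => xi_meas μ x) ?_ (integrable_const 1) ?_
  · filter_upwards [self_mem_nhdsWithin] with x hx
    rw [Set.mem_Ioi] at hx
    filter_upwards [xi_ae_nonneg μ hμ] with u hu
    have hxu : 0 < x + u := by linarith
    rw [Real.norm_eq_abs, abs_div, abs_of_pos hx, abs_of_pos hxu, div_le_one hxu]
    linarith
  · filter_upwards [xi_ae_nonneg μ hμ] with u hu
    rcases eq_or_lt_of_le hu with h0 | h0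
    · subst h0
      have : Set.indicator ({0} : Set ℝ) (fun _ => (1 : ℝ)) 0 = 1 := by simp
      rw [this]
      refine Tendsto.congr' ?_ tendsto_const_nhds
      filter_upwards [self_mem_nhdsWithin] with x hx
      rw [Set.mem_Ioi] at hx
      rw [add_zero, div_self (ne_of_gt hx)]
    · have hne : u ∉ ({0} : Set ℝ) := by simpa using ne_of_gt h0
      rw [Set.indicator_of_notMem hne]
      have : ContinuousAt (fun x : ℝ => x / (x + u)) 0 :=
        ContinuousAt.div continuousAt_id
          ((continuous_id.add continuous_const).continuousAt) (by simpa using ne_of_gt h0)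
      have h3 : Tendsto (fun x : ℝ => x / (x + u)) (𝓝[>] 0) (𝓝 (0 / (0 + u))) :=
        this.tendsto.mono_left nhdsWithin_le_nhds
      simpa using h3

end XiAux

/-- The function `t ↦ 1 + ψ_μ(-1/t)` is a nondecreasing right-continuous function on
`(0,∞)` tending to `1` at `∞` and to `μ({0})` at `0⁺`, hence it is the distribution
function of a probability measure `Ξ(μ)` on `[0,∞)` with `Ξ(μ)({0}) = μ({0})`. -/
theorem xi_distribution_function (μ : Measure ℝ) [IsProbabilityMeasure μ]
    (hμ : μ (Set.Iio 0) = 0) :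
    MonotoneOn (fun t : ℝ => 1 + ∫ u, (-1 / t) * u / (1 - (-1 / t) * u) ∂μ)
      (Set.Ioi 0) ∧
    (∀ t : ℝ, 0 < t →
      ContinuousWithinAt (fun t : ℝ => 1 + ∫ u, (-1 / t) * u / (1 - (-1 / t) * u) ∂μ)
        (Set.Ici t) t) ∧
    Tendsto (fun t : ℝ => 1 + ∫ u, (-1 / t) * u / (1 - (-1 / t) * u) ∂μ)
      atTop (nhds 1) ∧
    Tendsto (fun t : ℝ => 1 + ∫ u, (-1 / t) * u / (1 - (-1 / t) * u) ∂μ)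
      (nhdsWithin 0 (Set.Ioi 0)) (nhds ((μ {0}).toReal)) ∧
    ∃ ξ : Measure ℝ, IsProbabilityMeasure ξ ∧ ξ (Set.Iio 0) = 0 ∧
      (∀ t : ℝ, 0 < t →
        (ξ (Set.Iic t)).toReal = 1 + ∫ u, (-1 / t) * u / (1 - (-1 / t) * u) ∂μ) ∧
      ξ {0} = μ {0} := by
  set m : ℝ := (μ {0}).toReal with hm
  have hm0 : 0 ≤ m := ENNReal.toReal_nonneg
  set g : ℝ → ℝ := fun t => ∫ u, t / (t + u) ∂μ with hg
  -- the four analytic statements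
  have Hmono : MonotoneOn (fun t : ℝ => 1 + ∫ u, (-1 / t) * u / (1 - (-1 / t) * u) ∂μ)
      (Set.Ioi 0) := by
    intro a ha b hb hab
    simp only
    rw [xi_key hμ ha, xi_key hμ hb]
    exact xi_mono hμ ha hb hab
  have Hcont : ∀ t : ℝ, 0 < t →
      ContinuousWithinAt (fun t : ℝ => 1 + ∫ u, (-1 / t) * u / (1 - (-1 / t) * u) ∂μ)
        (Set.Ici t) t := by
    intro t ht
    refine ((xi_cont hμ ht).continuousWithinAt).congr ?_ ?_
    · intro x hx
      exact xi_key hμ (lt_of_lt_of_le ht hx)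
    · exact xi_key hμ ht
  have Htop : Tendsto (fun t : ℝ => 1 + ∫ u, (-1 / t) * u / (1 - (-1 / t) * u) ∂μ)
      atTop (𝓝 1) := by
    refine Tendsto.congr' ?_ (xi_top hμ)
    filter_upwards [eventually_gt_atTop 0] with x hx
    exact (xi_key hμ hx).symm
  have Hzero : Tendsto (fun t : ℝ => 1 + ∫ u, (-1 / t) * u / (1 - (-1 / t) * u) ∂μ)
      (𝓝[>] 0) (𝓝 m) := by
    refine Tendsto.congr' ?_ (xi_zero hμ)
    filter_upwards [self_mem_nhdsWithin] with x hx
    exact (xi_key hμ hx).symm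
  refine ⟨Hmono, Hcont, Htop, Hzero, ?_⟩
  -- the Stieltjes function
  set F : ℝ → ℝ := fun t => if 0 < t then g t else if t = 0 then m else 0 with hF
  have hF_of_pos : ∀ t : ℝ, 0 < t → F t = g t := fun t ht => by simp [hF, ht]
  have hF_of_neg : ∀ t : ℝ, t < 0 → F t = 0 := fun t ht => by
    simp [hF, not_lt_of_gt ht, ne_of_lt ht]
  have hF0 : F 0 = m := by simp [hF]
  have hFle : ∀ t : ℝ, t ≤ 0 → F t ≤ m := by
    intro t ht
    rcases eq_or_lt_of_le ht with h | h
    · simp [hF, h]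
    · rw [hF_of_neg t h]; exact hm0
  have hmono : Monotone F := by
    intro a b hab
    rcases lt_or_ge 0 a with ha | ha
    · have hb : 0 < b := lt_of_lt_of_le ha hab
      rw [hF_of_pos a ha, hF_of_pos b hb]
      exact xi_mono hμ ha hb hab
    · rcases lt_or_ge 0 b with hb | hb
      · rw [hF_of_pos b hb]
        exact le_trans (hFle a ha) (xi_ge hμ hb)
      · rcases eq_or_lt_of_le hb with h | h
        · subst h
          rw [hF0]
          exact hFle a hab
        · rw [hF_of_neg b h, hF_of_neg a (lt_of_le_of_lt hab h)]
  have hrc : ∀ x : ℝ, ContinuousWithinAt F (Set.Ici x) x := by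
    intro x
    rcases lt_trichotomy x 0 with hx | hx | hx
    · -- x < 0 : locally constant 0
      have hmem : Set.Iio (0:ℝ) ∈ 𝓝[≥] x :=
        nhdsWithin_le_nhds (Iio_mem_nhds hx)
      have hx0 : F x = 0 := hF_of_neg x hx
      unfold ContinuousWithinAt
      rw [hx0]
      refine Tendsto.congr' ?_ (tendsto_const_nhds (x := (0:ℝ)))
      filter_upwards [hmem] with y hy
      exact (hF_of_neg y hy).symm
    · subst hx
      unfold ContinuousWithinAt
      rw [hF0]
      have hsplit : Set.Ici (0:ℝ) = {0} ∪ Set.Ioi 0 := by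
        ext y; simp [le_iff_lt_or_eq, or_comm, eq_comm]
      rw [hsplit, nhdsWithin_union]
      rw [tendsto_sup]
      constructor
      · rw [nhdsWithin_singleton]
        rw [← hF0]
        exact tendsto_pure_nhds F 0
      · refine Tendsto.congr' ?_ (xi_zero hμ)
        filter_upwards [self_mem_nhdsWithin] with y hy
        exact (hF_of_pos y hy).symm
    · -- x > 0
      have : ContinuousAt F x := by
        refine ContinuousAt.congr (xi_cont hμ hx) ?_
        filter_upwards [eventually_gt_nhds hx] with y hy
        exact (hF_of_pos y hy).symm
      exact this.continuousWithinAt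
  set S : StieltjesFunction ℝ := ⟨F, hmono, hrc⟩ with hS
  have hbot : Tendsto S atBot (𝓝 0) := by
    refine Tendsto.congr' ?_ (tendsto_const_nhds (x := (0:ℝ)))
    filter_upwards [eventually_lt_atBot 0] with y hy
    exact (hF_of_neg y hy).symm
  have htop : Tendsto S atTop (𝓝 1) := by
    refine Tendsto.congr' ?_ (xi_top hμ)
    filter_upwards [eventually_gt_atTop 0] with y hy
    exact (hF_of_pos y hy).symm
  have hleft : Function.leftLim (S : ℝ → ℝ) 0 = 0 := by
    refine leftLim_eq_of_tendsto (h := ?_) ?_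
    · exact nhdsLT_neBot (0:ℝ)
    · refine Tendsto.congr' ?_ (tendsto_const_nhds (x := (0:ℝ)))
      filter_upwards [self_mem_nhdsWithin] with y hy
      exact (hF_of_neg y hy).symm
  have hsing : S.measure {0} = μ {0} := by
    rw [StieltjesFunction.measure_singleton, hleft]
    show ENNReal.ofReal (F 0 - 0) = μ {0}
    rw [hF0, sub_zero, hm, ENNReal.ofReal_toReal (measure_ne_top μ _)]
  have hIic : ∀ t : ℝ, S.measure (Set.Iic t) = ENNReal.ofReal (F t) := by
    intro t
    rw [S.measure_Iic hbot, sub_zero]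
  refine ⟨S.measure, S.isProbabilityMeasure hbot htop, ?_, ?_, hsing⟩
  · have hdiff : Set.Iio (0:ℝ) = Set.Iic 0 \ {0} := (Set.Iic_diff_right).symm
    rw [hdiff, measure_diff (by simp) ((measurableSet_singleton 0).nullMeasurableSet)
      (by rw [hsing]; exact measure_ne_top μ _)]
    rw [hIic 0, hsing, hF0, hm, ENNReal.ofReal_toReal (measure_ne_top μ _), tsub_self]
  · intro t ht
    rw [hIic t, hF_of_pos t ht, ENNReal.toReal_ofReal (le_trans hm0 (xi_ge hμ ht)),
      xi_key hμ ht]
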